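/- Let a1, ..., a6 be real numbers and set a7 = a4 + a5 − a6 and a8 = a1 + a2 + a3 − a4 − a5. Assume a1, ..., a6, a7, a8 are all nonnegative and that the eight numbers a1, a2, a3, a4, a5, a6, a7, a8 are pairwise distinct. Then the nine numbers α1 = 0, α2 = −2a1−2a2−a4−a5, α3 = −2a1−2a3−a4−a5, α4 = −2a2−2a3−a4−a5, α5 = −2a1−2a2−2a3+a4−a5, α6 = −2a1−2a2−2a3−a4+a5, α7 = −3(a4+a5), α8 = −2a1−2a2−2a3+a4+a5−2a6, α9 = −2a1−2a2−2a3−a4−a5+2a6 are pairwise distinct. -/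
import Mathlib


/-- with `a7 = a4 + a5 − a6` and `a8 = a1 + a2 + a3 − a4 − a5`, if
`a1, ..., a8` are nonnegative and pairwise distinct, then the nine eigenvalues
`α1, ..., α9` of the generator of evolution are pairwise distinct. -/
theorem eigenvalues_pairwise_distinct (a1 a2 a3 a4 a5 a6 a7 a8 : ℝ)
    (h7 : a7 = a4 + a5 - a6) (h8 : a8 = a1 + a2 + a3 - a4 - a5)
    (h1 : 0 ≤ a1) (h2 : 0 ≤ a2) (h3 : 0 ≤ a3) (h4 : 0 ≤ a4)
    (h5 : 0 ≤ a5) (h6 : 0 ≤ a6) (h7' : 0 ≤ a7) (h8' : 0 ≤ a8)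
    (hdist : List.Pairwise (· ≠ ·) [a1, a2, a3, a4, a5, a6, a7, a8]) :
    List.Pairwise (· ≠ ·)
      [(0 : ℝ),
       -2 * a1 - 2 * a2 - a4 - a5,
       -2 * a1 - 2 * a3 - a4 - a5,
       -2 * a2 - 2 * a3 - a4 - a5,
       -2 * a1 - 2 * a2 - 2 * a3 + a4 - a5,
       -2 * a1 - 2 * a2 - 2 * a3 - a4 + a5,
       -3 * (a4 + a5),
       -2 * a1 - 2 * a2 - 2 * a3 + a4 + a5 - 2 * a6,
       -2 * a1 - 2 * a2 - 2 * a3 - a4 - a5 + 2 * a6] := by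
  subst h7 h8
  simp only [List.pairwise_cons, List.mem_cons, List.not_mem_nil, or_false,
    forall_eq_or_imp, forall_eq, List.Pairwise.nil, and_true,
    List.not_mem_nil, IsEmpty.forall_iff, implies_true] at hdist ⊢
  obtain ⟨⟨e12, e13, e14, e15, e16, e17, e18⟩, ⟨e23, e24, e25, e26, e27, e28⟩,
    ⟨e34, e35, e36, e37, e38⟩, ⟨e45, e46, e47, e48⟩, ⟨e56, e57, e58⟩,
    ⟨e67, e68⟩, e78⟩ := hdist
  refine ⟨?_, ?_, ?_, ?_, ?_, ?_, ?_, ?_⟩ <;>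
  [ refine ⟨?_,?_,?_,?_,?_,?_,?_,?_⟩;
    refine ⟨?_,?_,?_,?_,?_,?_,?_⟩;
    refine ⟨?_,?_,?_,?_,?_,?_⟩;
    refine ⟨?_,?_,?_,?_,?_⟩;
    refine ⟨?_,?_,?_,?_⟩;
    refine ⟨?_,?_,?_⟩;
    refine ⟨?_,?_⟩;
    skip ] <;>
  · intro h
    first
    | exact e12 (by linarith) | exact e13 (by linarith) | exact e14 (by linarith)
    | exact e15 (by linarith) | exact e16 (by linarith) | exact e17 (by linarith)
    | exact e18 (by linarith) | exact e23 (by linarith) | exact e24 (by linarith)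
    | exact e25 (by linarith) | exact e26 (by linarith) | exact e27 (by linarith)
    | exact e28 (by linarith) | exact e34 (by linarith) | exact e35 (by linarith)
    | exact e36 (by linarith) | exact e37 (by linarith) | exact e38 (by linarith)
    | exact e45 (by linarith) | exact e46 (by linarith) | exact e47 (by linarith)
    | exact e48 (by linarith) | exact e56 (by linarith) | exact e57 (by linarith)
    | exact e58 (by linarith) | exact e67 (by linarith) | exact e68 (by linarith)
    | exact e78 (by linarith)
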